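/- arXiv:2203.11927 — 2 statements merged into one kernel-verified Lean document; each statement's English description precedes it below -/
import Mathlib

section
/- (No merging under property I) Suppose σ_1, …, σ_r satisfy property I with witnesses α_1, …, α_r. Then for every nonempty I ⊆ {1,…,r} and every p ∈ {1,…,r} \ I with σ_I ∩ σ_p ≠ ∅, one has c(I ∪ {p}) = c(I); that is, adjoining a nonface meeting σ_I never changes the number of connected components of the intersection graph. -/
open Finset LaurentPolynomial

noncomputable section

/-- The union `σ_I = ⋃_{i ∈ I} σ_i`. -/
def unionOver {ι V : Type*} [DecidableEq V] (σ : ι → Finset V) (I : Finset ι) : Finset V :=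
  I.sup σ

/-- The intersection graph `G_I` on the vertex set `I`. -/
def interGraph {ι V : Type*} [DecidableEq V] (σ : ι → Finset V) (I : Finset ι) :
    SimpleGraph {i // i ∈ I} where
  Adj i j := i ≠ j ∧ (σ i.1 ∩ σ j.1).Nonempty
  symm := by
    refine ⟨fun i j h => ?_⟩
    exact ⟨h.1.symm, by rw [Finset.inter_comm]; exact h.2⟩
  loopless := by refine ⟨fun i h => ?_⟩; exact h.1 rfl

/-- `c(I)`, the number of connected components of `G_I`. -/
def compCount {ι V : Type*} [DecidableEq V] (σ : ι → Finset V) (I : Finset ι) : ℕ :=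
  Nat.card (interGraph σ I).ConnectedComponent

/-- Property I. -/
def PropertyI {ι V W : Type*} [DecidableEq V] [DecidableEq W]
    (σ : ι → Finset V) (α : ι → Finset W) : Prop :=
  (∀ i, (α i).card + 1 = (σ i).card) ∧
  ∀ I : Finset ι, I.Nonempty → ∀ p ∉ I,
    (unionOver σ I ∩ σ p = ∅ → unionOver α I ∩ α p = ∅) ∧
    ((unionOver σ I ∩ σ p).Nonempty →
      (unionOver α I ∩ α p).card + 1 = (unionOver σ I ∩ σ p).card)

/-- The simplicial chromatic polynomial. -/
def simpChrom {ι : Type*} [Fintype ι] [DecidableEq ι] {n : ℕ} (σ : ι → Finset (Fin n)) :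
    LaurentPolynomial ℤ :=
  T (n : ℤ) +
  ∑ I ∈ (univ : Finset ι).powerset.filter (fun I => I.Nonempty),
    (-1) ^ I.card *
      T ((n : ℤ) - ((unionOver σ I).card : ℤ) + (compCount σ I : ℤ))

/-- Faces of the complex whose minimal nonfaces are the `α i`. -/
def facesOf {ι : Type*} [Fintype ι] {N : ℕ} (α : ι → Finset (Fin N)) :
    Finset (Finset (Fin N)) :=
  (univ : Finset (Finset (Fin N))).filter (fun F => ∀ i, ¬ α i ⊆ F)

/-- Coefficient of `t^k` in a Laurent polynomial. -/
def lcoeff (p : LaurentPolynomial ℤ) (k : ℤ) : ℤ := p.coeff k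

end

noncomputable section Aux
set_option linter.unusedSectionVars false

open SimpleGraph

variable {ι V W : Type*} [DecidableEq V] [DecidableEq W] [DecidableEq ι]

lemma mem_unionOver {σ : ι → Finset V} {I : Finset ι} {a : V} :
    a ∈ unionOver σ I ↔ ∃ i ∈ I, a ∈ σ i := Finset.mem_sup

lemma unionOver_insert (σ : ι → Finset V) (p : ι) (I : Finset ι) :
    unionOver σ (insert p I) = σ p ∪ unionOver σ I := Finset.sup_insert

instance ccFin (σ : ι → Finset V) (I : Finset ι) :
    Fintype (interGraph σ I).ConnectedComponent := Fintype.ofFinite _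

/-- The set of indices in the connected component `k`. -/
def compSet (σ : ι → Finset V) (I : Finset ι)
    (k : (interGraph σ I).ConnectedComponent) : Finset ι :=
  @Finset.filter ι
    (fun i => ∃ h : i ∈ I, (interGraph σ I).connectedComponentMk ⟨i, h⟩ = k)
    (Classical.decPred _) I

lemma mem_compSet {σ : ι → Finset V} {I : Finset ι}
    {k : (interGraph σ I).ConnectedComponent} {i : ι} :
    i ∈ compSet σ I k ↔ ∃ h : i ∈ I, (interGraph σ I).connectedComponentMk ⟨i, h⟩ = k := by
  unfold compSet
  rw [@Finset.mem_filter ι _ (Classical.decPred _) I i]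
  exact ⟨fun h => h.2, fun h => ⟨h.1, h⟩⟩

lemma compSet_subset (σ : ι → Finset V) (I : Finset ι)
    (k : (interGraph σ I).ConnectedComponent) : compSet σ I k ⊆ I := by
  intro i hi
  exact (mem_compSet.mp hi).1

lemma comp_eq_of_mem_compSet {σ : ι → Finset V} {I : Finset ι}
    {k : (interGraph σ I).ConnectedComponent} {i : {x // x ∈ I}}
    (hi : i.1 ∈ compSet σ I k) : (interGraph σ I).connectedComponentMk i = k := by
  obtain ⟨h, hk⟩ := mem_compSet.mp hi
  convert hk using 2

lemma compSet_nonempty (σ : ι → Finset V) (I : Finset ι)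
    (k : (interGraph σ I).ConnectedComponent) : (compSet σ I k).Nonempty := by
  obtain ⟨v, hv⟩ := k.exists_rep
  exact ⟨v.1, mem_compSet.mpr ⟨v.2, by exact hv⟩⟩

lemma compSet_eq_of_mem {σ : ι → Finset V} {I : Finset ι}
    {k l : (interGraph σ I).ConnectedComponent} {i : ι}
    (hk : i ∈ compSet σ I k) (hl : i ∈ compSet σ I l) : k = l := by
  obtain ⟨h, hk'⟩ := mem_compSet.mp hk
  obtain ⟨h', hl'⟩ := mem_compSet.mp hl
  rw [← hk', ← hl']

lemma biUnion_compSet (σ : ι → Finset V) (I : Finset ι) :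
    (Finset.univ : Finset (interGraph σ I).ConnectedComponent).biUnion (compSet σ I) = I := by
  ext i
  simp only [Finset.mem_biUnion, Finset.mem_univ, true_and]
  constructor
  · rintro ⟨k, hk⟩; exact compSet_subset σ I k hk
  · intro hi
    exact ⟨(interGraph σ I).connectedComponentMk ⟨i, hi⟩, mem_compSet.mpr ⟨hi, rfl⟩⟩

lemma sigma_cross {σ : ι → Finset V} {I : Finset ι}
    {k l : (interGraph σ I).ConnectedComponent} (hkl : k ≠ l) {i j : ι}
    (hi : i ∈ compSet σ I k) (hj : j ∈ compSet σ I l) : σ i ∩ σ j = ∅ := by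
  by_contra hne
  have hint : (σ i ∩ σ j).Nonempty := Finset.nonempty_iff_ne_empty.mpr hne
  have hiI := compSet_subset σ I k hi
  have hjI := compSet_subset σ I l hj
  have hij : i ≠ j := by
    rintro rfl
    exact hkl (compSet_eq_of_mem hi hj)
  have hadj : (interGraph σ I).Adj ⟨i, hiI⟩ ⟨j, hjI⟩ :=
    ⟨fun hc => hij (congrArg Subtype.val hc), hint⟩
  have : (interGraph σ I).connectedComponentMk ⟨i, hiI⟩ =
      (interGraph σ I).connectedComponentMk ⟨j, hjI⟩ :=
    SimpleGraph.ConnectedComponent.eq.mpr hadj.reachable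
  apply hkl
  rw [← comp_eq_of_mem_compSet (i := ⟨i, hiI⟩) hi, ← comp_eq_of_mem_compSet (i := ⟨j, hjI⟩) hj]
  exact this

lemma unionOver_sigma_disjoint {σ : ι → Finset V} {I : Finset ι}
    {k l : (interGraph σ I).ConnectedComponent} (hkl : k ≠ l) :
    Disjoint (unionOver σ (compSet σ I k)) (unionOver σ (compSet σ I l)) := by
  rw [Finset.disjoint_left]
  intro a hak hal
  obtain ⟨i, hi, hai⟩ := mem_unionOver.mp hak
  obtain ⟨j, hj, haj⟩ := mem_unionOver.mp hal
  have := sigma_cross hkl hi hj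
  have : a ∈ σ i ∩ σ j := Finset.mem_inter.mpr ⟨hai, haj⟩
  rw [sigma_cross hkl hi hj] at this
  exact absurd this (Finset.notMem_empty a)

lemma unionOver_alpha_disjoint {σ : ι → Finset V} {α : ι → Finset W}
    (h : PropertyI σ α) {I : Finset ι}
    {k l : (interGraph σ I).ConnectedComponent} (hkl : k ≠ l) :
    Disjoint (unionOver α (compSet σ I k)) (unionOver α (compSet σ I l)) := by
  rw [Finset.disjoint_left]
  intro a hak hal
  obtain ⟨j, hj, haj⟩ := mem_unionOver.mp hal
  have hpk : j ∉ compSet σ I k := fun hc => hkl (compSet_eq_of_mem hc hj)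
  have hσ : unionOver σ (compSet σ I k) ∩ σ j = ∅ := by
    apply Finset.eq_empty_of_forall_notMem
    intro x hx
    obtain ⟨hx1, hx2⟩ := Finset.mem_inter.mp hx
    obtain ⟨i, hi, hxi⟩ := mem_unionOver.mp hx1
    have := sigma_cross hkl hi hj
    have hmem : x ∈ σ i ∩ σ j := Finset.mem_inter.mpr ⟨hxi, hx2⟩
    rw [this] at hmem
    exact Finset.notMem_empty x hmem
  have := ((h.2 (compSet σ I k) (compSet_nonempty σ I k) j hpk).1 hσ)
  have hmem : a ∈ unionOver α (compSet σ I k) ∩ α j := Finset.mem_inter.mpr ⟨hak, haj⟩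
  rw [this] at hmem
  exact Finset.notMem_empty a hmem

/-- Walks starting in a σ-closed subset of a component stay inside it. -/
lemma walk_aux {σ : ι → Finset V} {I : Finset ι}
    {k : (interGraph σ I).ConnectedComponent} {S : Finset ι}
    (hSk : S ⊆ compSet σ I k)
    (H : ∀ p ∈ compSet σ I k, p ∉ S → ¬ (unionOver σ S ∩ σ p).Nonempty) :
    ∀ {i j : {x // x ∈ I}}, (interGraph σ I).Walk i j → i.1 ∈ S → j.1 ∈ S := by
  intro i j w
  induction w with
  | nil => exact fun h => h
  | @cons u v x hadj w ih =>
    intro hu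
    apply ih
    by_contra hv
    have hadj' : u ≠ v ∧ (σ u.1 ∩ σ v.1).Nonempty := hadj
    have hvk : v.1 ∈ compSet σ I k := by
      rw [mem_compSet]
      refine ⟨v.2, ?_⟩
      have h1 : (interGraph σ I).connectedComponentMk v =
          (interGraph σ I).connectedComponentMk u :=
        SimpleGraph.ConnectedComponent.eq.mpr hadj.symm.reachable
      have h2 := comp_eq_of_mem_compSet (hSk hu)
      have : (interGraph σ I).connectedComponentMk ⟨v.1, v.2⟩ =
          (interGraph σ I).connectedComponentMk v := by congr
      rw [this, h1, h2]
    apply H v.1 hvk hv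
    obtain ⟨x, hx⟩ := hadj'.2
    obtain ⟨hx1, hx2⟩ := Finset.mem_inter.mp hx
    exact ⟨x, Finset.mem_inter.mpr ⟨mem_unionOver.mpr ⟨u.1, hu, hx1⟩, hx2⟩⟩

/-- In a component, a proper nonempty subset has a neighbor outside. -/
lemma grow {σ : ι → Finset V} {I : Finset ι}
    {k : (interGraph σ I).ConnectedComponent} {S : Finset ι}
    (hSne : S.Nonempty) (hSk : S ⊆ compSet σ I k) (hne : S ≠ compSet σ I k) :
    ∃ p ∈ compSet σ I k, p ∉ S ∧ (unionOver σ S ∩ σ p).Nonempty := by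
  by_contra H
  push_neg at H
  obtain ⟨j, hjk, hjS⟩ : ∃ j ∈ compSet σ I k, j ∉ S := by
    by_contra hc
    push_neg at hc
    exact hne (Finset.Subset.antisymm hSk hc)
  obtain ⟨i, hiS⟩ := hSne
  have hik := hSk hiS
  have hiI := compSet_subset σ I k hik
  have hjI := compSet_subset σ I k hjk
  have hreach : (interGraph σ I).Reachable ⟨i, hiI⟩ ⟨j, hjI⟩ := by
    apply SimpleGraph.ConnectedComponent.eq.mp
    rw [comp_eq_of_mem_compSet (i := ⟨i, hiI⟩) hik,
      comp_eq_of_mem_compSet (i := ⟨j, hjI⟩) hjk]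
  obtain ⟨w⟩ := hreach
  exact hjS (walk_aux hSk (fun p hp hpS => Finset.not_nonempty_iff_eq_empty.mpr (H p hp hpS)) w hiS)

/-- Build-up lemma: the α/σ cardinality relation over a connected component. -/
lemma buildup {σ : ι → Finset V} {α : ι → Finset W} (h : PropertyI σ α)
    {I : Finset ι} (k : (interGraph σ I).ConnectedComponent) :
    ∀ n (S : Finset ι), S.Nonempty → S ⊆ compSet σ I k →
      (compSet σ I k \ S).card ≤ n →
      (unionOver α S).card + 1 = (unionOver σ S).card →
      (unionOver α (compSet σ I k)).card + 1 = (unionOver σ (compSet σ I k)).card := by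
  intro n
  induction n with
  | zero =>
    intro S hSne hSk hcard hS
    have : S = compSet σ I k := by
      apply Finset.Subset.antisymm hSk
      intro x hx
      by_contra hxS
      have : x ∈ compSet σ I k \ S := Finset.mem_sdiff.mpr ⟨hx, hxS⟩
      have := Finset.card_pos.mpr ⟨x, this⟩
      omega
    rwa [← this]
  | succ n ih =>
    intro S hSne hSk hcard hS
    by_cases heq : S = compSet σ I k
    · rwa [← heq]
    obtain ⟨p, hpk, hpS, hint⟩ := grow hSne hSk heq
    have hprop := (h.2 S hSne p hpS).2 hint
    have hIEσ : (σ p ∪ unionOver σ S).card + (σ p ∩ unionOver σ S).card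
        = (σ p).card + (unionOver σ S).card := Finset.card_union_add_card_inter _ _
    have hIEα : (α p ∪ unionOver α S).card + (α p ∩ unionOver α S).card
        = (α p).card + (unionOver α S).card := Finset.card_union_add_card_inter _ _
    have hcomm1 : σ p ∩ unionOver σ S = unionOver σ S ∩ σ p := Finset.inter_comm _ _
    have hcomm2 : α p ∩ unionOver α S = unionOver α S ∩ α p := Finset.inter_comm _ _
    rw [hcomm1] at hIEσ
    rw [hcomm2] at hIEα
    have hp1 := h.1 p
    have hnew : (unionOver α (insert p S)).card + 1 = (unionOver σ (insert p S)).card := by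
      rw [unionOver_insert, unionOver_insert]
      omega
    apply ih (insert p S) (Finset.insert_nonempty _ _)
      (Finset.insert_subset hpk hSk) ?_ hnew
    have hsub : compSet σ I k \ insert p S ⊆ (compSet σ I k \ S).erase p := by
      intro x hx
      rw [Finset.mem_sdiff, Finset.mem_insert] at hx
      rw [Finset.mem_erase, Finset.mem_sdiff]
      push_neg at hx
      exact ⟨hx.2.1, hx.1, hx.2.2⟩
    have h1 := Finset.card_le_card hsub
    have h2 := Finset.card_erase_of_mem (Finset.mem_sdiff.mpr ⟨hpk, hpS⟩)
    have h3 : 0 < (compSet σ I k \ S).card :=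
      Finset.card_pos.mpr ⟨p, Finset.mem_sdiff.mpr ⟨hpk, hpS⟩⟩
    omega

/-- The main invariant: |α_I| + c(I) = |σ_I|. -/
lemma invA {σ : ι → Finset V} {α : ι → Finset W} (h : PropertyI σ α)
    (I : Finset ι) (hI : I.Nonempty) :
    (unionOver α I).card + compCount σ I = (unionOver σ I).card := by
  classical
  set K := (interGraph σ I).ConnectedComponent
  have hσcard : (unionOver σ I).card
      = ∑ k ∈ (Finset.univ : Finset K), (unionOver σ (compSet σ I k)).card := by
    have h1 : unionOver σ I
        = (Finset.univ : Finset K).biUnion (fun k => unionOver σ (compSet σ I k)) := by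
      ext a
      rw [mem_unionOver, Finset.mem_biUnion]
      constructor
      · rintro ⟨i, hi, hai⟩
        refine ⟨(interGraph σ I).connectedComponentMk ⟨i, hi⟩, Finset.mem_univ _, ?_⟩
        exact mem_unionOver.mpr ⟨i, mem_compSet.mpr ⟨hi, rfl⟩, hai⟩
      · rintro ⟨k, _, hak⟩
        obtain ⟨i, hi, hai⟩ := mem_unionOver.mp hak
        exact ⟨i, compSet_subset σ I k hi, hai⟩
    rw [h1]
    exact Finset.card_biUnion (fun k _ l _ hkl => unionOver_sigma_disjoint hkl)
  have hαcard : (unionOver α I).card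
      = ∑ k ∈ (Finset.univ : Finset K), (unionOver α (compSet σ I k)).card := by
    have h1 : unionOver α I
        = (Finset.univ : Finset K).biUnion (fun k => unionOver α (compSet σ I k)) := by
      ext a
      rw [mem_unionOver, Finset.mem_biUnion]
      constructor
      · rintro ⟨i, hi, hai⟩
        refine ⟨(interGraph σ I).connectedComponentMk ⟨i, hi⟩, Finset.mem_univ _, ?_⟩
        exact mem_unionOver.mpr ⟨i, mem_compSet.mpr ⟨hi, rfl⟩, hai⟩
      · rintro ⟨k, _, hak⟩
        obtain ⟨i, hi, hai⟩ := mem_unionOver.mp hak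
        exact ⟨i, compSet_subset σ I k hi, hai⟩
    rw [h1]
    exact Finset.card_biUnion (fun k _ l _ hkl => unionOver_alpha_disjoint h hkl)
  have hcomp : ∀ k : K, (unionOver α (compSet σ I k)).card + 1
      = (unionOver σ (compSet σ I k)).card := by
    intro k
    obtain ⟨v, hv⟩ := compSet_nonempty σ I k
    apply buildup h k (compSet σ I k \ {v}).card {v} (Finset.singleton_nonempty v)
      (Finset.singleton_subset_iff.mpr hv) le_rfl
    have h1 : unionOver α {v} = α v := Finset.sup_singleton
    have h2 : unionOver σ {v} = σ v := Finset.sup_singleton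
    rw [h1, h2]
    exact h.1 v
  have hc : compCount σ I = Fintype.card K := Nat.card_eq_fintype_card
  rw [hσcard, hαcard, hc]
  have : ∑ k ∈ (Finset.univ : Finset K), (unionOver σ (compSet σ I k)).card
      = ∑ k ∈ (Finset.univ : Finset K), ((unionOver α (compSet σ I k)).card + 1) := by
    apply Finset.sum_congr rfl
    intro k _
    exact (hcomp k).symm
  rw [this, Finset.sum_add_distrib, Finset.sum_const, smul_eq_mul, mul_one,
    Finset.card_univ]

end Aux

/-- no merging under property I: under property I, for every nonempty `I`
and `p ∉ I` with `σ_I ∩ σ_p ≠ ∅`, one has `c(I ∪ {p}) = c(I)`. -/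
theorem stmt_17 {V W : Type*} [DecidableEq V] [DecidableEq W] {r : ℕ}
    (σ : Fin r → Finset V) (α : Fin r → Finset W)
    (h : PropertyI σ α) :
    ∀ I : Finset (Fin r), I.Nonempty → ∀ p ∉ I,
      (unionOver σ I ∩ σ p).Nonempty →
      compCount σ (insert p I) = compCount σ I := by
  intro I hI p hp hint
  have hA1 := invA h I hI
  have hA2 := invA h (insert p I) (Finset.insert_nonempty p I)
  have hprop := (h.2 I hI p hp).2 hint
  have hp1 := h.1 p
  have hIEσ : (σ p ∪ unionOver σ I).card + (σ p ∩ unionOver σ I).card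
      = (σ p).card + (unionOver σ I).card := Finset.card_union_add_card_inter _ _
  have hIEα : (α p ∪ unionOver α I).card + (α p ∩ unionOver α I).card
      = (α p).card + (unionOver α I).card := Finset.card_union_add_card_inter _ _
  rw [Finset.inter_comm] at hIEσ hIEα
  rw [unionOver_insert, unionOver_insert] at hA2
  omega
end

section
/- (Lowest coefficient is the reduced Euler characteristic of the auxiliary complex) Suppose σ_1, …, σ_r satisfy property I with witnesses α_1, …, α_r ⊆ {1,…,N}. Then the coefficient of t^{n−N} in χ_c(S)(t) equals Σ_{F ∈ T(S)} (−1)^{N−|F|} = (−1)^{N−1} χ̃(T(S)), where χ̃(T) := −Σ_{F ∈ T} (−1)^{|F|} (the sum over all faces of T including the empty face) is the reduced Euler characteristic of T. -/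
open Finset LaurentPolynomial

set_option linter.unusedSectionVars false

section Aux

open SimpleGraph

variable {ι V W : Type*} [DecidableEq ι] [DecidableEq V] [DecidableEq W]

/-- A finset that can be built by successively adding elements meeting the current union. -/
inductive Build (σ : ι → Finset V) : Finset ι → Prop
  | single (v : ι) : Build σ {v}
  | grow {P : Finset ι} (p : ι) : Build σ P → p ∉ P →
      (unionOver σ P ∩ σ p).Nonempty → Build σ (insert p P)

lemma Build.nonempty {σ : ι → Finset V} {P : Finset ι} (h : Build σ P) : P.Nonempty := by
  induction h with
  | single v => exact ⟨v, Finset.mem_singleton_self v⟩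
  | grow p _ _ _ _ => exact Finset.insert_nonempty _ _

lemma Build.card_eq {σ : ι → Finset V} {α : ι → Finset W} (h : PropertyI σ α)
    {P : Finset ι} (hb : Build σ P) :
    (unionOver α P).card + 1 = (unionOver σ P).card := by
  induction hb with
  | single v => simpa [unionOver] using h.1 v
  | @grow P p hb hp hne ih =>
    have hprop := (h.2 P hb.nonempty p hp).2 hne
    have h1 := Finset.card_union_add_card_inter (σ p) (unionOver σ P)
    have h2 := Finset.card_union_add_card_inter (α p) (unionOver α P)
    have e1 : unionOver σ (insert p P) = σ p ∪ unionOver σ P := by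
      simp [unionOver, Finset.sup_insert]
    have e2 : unionOver α (insert p P) = α p ∪ unionOver α P := by
      simp [unionOver, Finset.sup_insert]
    rw [Finset.inter_comm] at h1 h2
    rw [e1, e2]
    have h3 := h.1 p
    omega

lemma exists_cross {σ : ι → Finset V} {I P : Finset ι} :
    ∀ {x y : {i // i ∈ I}}, (interGraph σ I).Walk x y → x.1 ∈ P → y.1 ∉ P →
      ∃ b ∈ I, b ∉ P ∧ (unionOver σ P ∩ σ b).Nonempty := by
  intro x y w
  induction w with
  | nil => intro hx hy; exact absurd hx hy
  | @cons u v y hadj w ih =>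
    intro hx hy
    by_cases hv : v.1 ∈ P
    · exact ih hv hy
    · refine ⟨v.1, v.2, hv, ?_⟩
      obtain ⟨-, c, hc⟩ := hadj
      rw [Finset.mem_inter] at hc
      exact ⟨c, Finset.mem_inter.2 ⟨Finset.mem_sup.2 ⟨u.1, hx, hc.1⟩, hc.2⟩⟩

lemma build_of_preconnected {σ : ι → Finset V} {I : Finset ι}
    (hne : I.Nonempty) (hpre : (interGraph σ I).Preconnected) : Build σ I := by
  classical
  obtain ⟨x0, hx0⟩ := hne
  suffices H : ∀ k (P : Finset ι), (I \ P).card ≤ k → P ⊆ I → Build σ P → Build σ I by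
    exact H (I \ {x0}).card {x0} le_rfl (by simpa using hx0) (Build.single x0)
  intro k
  induction k with
  | zero =>
    intro P hcard hPI hb
    have h0 : I \ P = ∅ := Finset.card_eq_zero.1 (Nat.le_zero.1 hcard)
    have : P = I := Finset.Subset.antisymm hPI (Finset.sdiff_eq_empty_iff_subset.1 h0)
    rwa [this] at hb
  | succ k ih =>
    intro P hcard hPI hb
    by_cases hIP : I ⊆ P
    · have : P = I := Finset.Subset.antisymm hPI hIP
      rwa [this] at hb
    · obtain ⟨y, hyI, hyP⟩ := Finset.not_subset.1 hIP
      obtain ⟨x, hxP⟩ := hb.nonempty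
      obtain ⟨w⟩ := hpre ⟨x, hPI hxP⟩ ⟨y, hyI⟩
      obtain ⟨b, hbI, hbP, hbne⟩ := exists_cross w hxP hyP
      refine ih (insert b P) ?_ (Finset.insert_subset hbI hPI) (Build.grow b hb hbP hbne)
      have hsub : I \ insert b P ⊆ (I \ P).erase b := by
        intro z hz
        simp only [Finset.mem_sdiff, Finset.mem_insert, not_or] at hz
        simp only [Finset.mem_erase, Finset.mem_sdiff]
        exact ⟨hz.2.1, hz.1, hz.2.2⟩
      have hbmem : b ∈ I \ P := Finset.mem_sdiff.2 ⟨hbI, hbP⟩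
      have := Finset.card_le_card hsub
      rw [Finset.card_erase_of_mem hbmem] at this
      have hpos : 0 < (I \ P).card := Finset.card_pos.2 ⟨b, hbmem⟩
      omega

lemma compCount_eq_one {σ : ι → Finset V} {I : Finset ι} (hne : I.Nonempty)
    (hpre : (interGraph σ I).Preconnected) : compCount σ I = 1 := by
  obtain ⟨x, hx⟩ := hne
  have hsub := hpre.subsingleton_connectedComponent
  rw [compCount, Nat.card_eq_one_iff_unique]
  exact ⟨hsub, ⟨(interGraph σ I).connectedComponentMk ⟨x, hx⟩⟩⟩

end Aux

set_option linter.unusedSectionVars false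

section Aux2

open SimpleGraph

variable {ι V : Type*} [DecidableEq ι] [DecidableEq V]

def inclHom (σ : ι → Finset V) {A I : Finset ι} (h : A ⊆ I) :
    interGraph σ A →g interGraph σ I where
  toFun x := ⟨x.1, h x.2⟩
  map_rel' := by
    intro x y hxy
    exact ⟨fun hc => hxy.1 (Subtype.ext (Subtype.mk_eq_mk.mp hc)), hxy.2⟩

lemma compCount_union {σ : ι → Finset V} {A B : Finset ι}
    (hd : Disjoint A B)
    (hcross : ∀ a ∈ A, ∀ b ∈ B, σ a ∩ σ b = ∅) :
    compCount σ (A ∪ B) = compCount σ A + compCount σ B := by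
  classical
  haveI : Fintype {i // i ∈ A ∪ B} := FinsetCoe.fintype _
  haveI : Fintype {i // i ∈ A} := FinsetCoe.fintype _
  haveI : Fintype {i // i ∈ B} := FinsetCoe.fintype _
  set GU := interGraph σ (A ∪ B) with hGU
  set GA := interGraph σ A with hGA
  set GB := interGraph σ B with hGB
  let f : GA.ConnectedComponent ⊕ GB.ConnectedComponent → GU.ConnectedComponent :=
    Sum.elim (ConnectedComponent.map (inclHom σ Finset.subset_union_left))
             (ConnectedComponent.map (inclHom σ Finset.subset_union_right))
  have memB : ∀ x : {i // i ∈ A ∪ B}, x.1 ∉ A → x.1 ∈ B := fun x hx =>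
    (Finset.mem_union.1 x.2).resolve_left hx
  let g0 : {i // i ∈ A ∪ B} → GA.ConnectedComponent ⊕ GB.ConnectedComponent :=
    fun x => if h : x.1 ∈ A then Sum.inl (GA.connectedComponentMk ⟨x.1, h⟩)
             else Sum.inr (GB.connectedComponentMk ⟨x.1, memB x h⟩)
  have gstep : ∀ {u v : {i // i ∈ A ∪ B}}, GU.Adj u v → g0 u = g0 v := by
    intro u v huv
    obtain ⟨hne, hinter⟩ := huv
    have hvalne : u.1 ≠ v.1 := fun hc => hne (Subtype.ext hc)
    by_cases hu : u.1 ∈ A <;> by_cases hv : v.1 ∈ A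
    · simp only [g0, dif_pos hu, dif_pos hv]
      refine congrArg Sum.inl (ConnectedComponent.connectedComponentMk_eq_of_adj ?_)
      exact ⟨fun hc => hvalne (Subtype.mk_eq_mk.mp hc), hinter⟩
    · exact absurd hinter (by rw [hcross u.1 hu v.1 (memB v hv)]; simp)
    · rw [Finset.inter_comm] at hinter
      exact absurd hinter (by rw [hcross v.1 hv u.1 (memB u hu)]; simp)
    · simp only [g0, dif_neg hu, dif_neg hv]
      refine congrArg Sum.inr (ConnectedComponent.connectedComponentMk_eq_of_adj ?_)
      exact ⟨fun hc => hvalne (Subtype.mk_eq_mk.mp hc), hinter⟩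
  have gwalk : ∀ {u v : {i // i ∈ A ∪ B}}, GU.Walk u v → g0 u = g0 v := by
    intro u v w
    induction w with
    | nil => rfl
    | cons h w ih => exact (gstep h).trans ih
  let g : GU.ConnectedComponent → GA.ConnectedComponent ⊕ GB.ConnectedComponent :=
    ConnectedComponent.lift g0 (fun u v p _ => gwalk p)
  have hgf : ∀ s, g (f s) = s := by
    rintro (c | c)
    · induction c using ConnectedComponent.ind with
      | _ x =>
        show g0 ⟨x.1, _⟩ = Sum.inl (GA.connectedComponentMk x)
        simp only [g0, dif_pos x.2]
    · induction c using ConnectedComponent.ind with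
      | _ x =>
        show g0 ⟨x.1, _⟩ = Sum.inr (GB.connectedComponentMk x)
        have hxA : x.1 ∉ A := Finset.disjoint_right.mp hd x.2
        simp only [g0, dif_neg hxA]
  have hfg : ∀ c, f (g c) = c := by
    intro c
    induction c using ConnectedComponent.ind with
    | _ x =>
      show f (g0 x) = GU.connectedComponentMk x
      by_cases hx : x.1 ∈ A
      · simp only [g0, dif_pos hx, f, Sum.elim_inl, ConnectedComponent.map_mk]
        rfl
      · simp only [g0, dif_neg hx, f, Sum.elim_inr, ConnectedComponent.map_mk]
        rfl
  have e : (GA.ConnectedComponent ⊕ GB.ConnectedComponent) ≃ GU.ConnectedComponent :=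
    ⟨f, g, hgf, hfg⟩
  rw [compCount, compCount, compCount, ← Nat.card_congr e, Nat.card_sum]

end Aux2

section Aux3

open SimpleGraph Finset

variable {ι V W : Type*} [DecidableEq ι] [DecidableEq V] [DecidableEq W]

lemma key_card {σ : ι → Finset V} {α : ι → Finset W} (h : PropertyI σ α) :
    ∀ I : Finset ι, I.Nonempty →
      (unionOver α I).card + compCount σ I = (unionOver σ I).card := by
  classical
  intro I
  induction I using Finset.strongInduction with
  | _ I ih =>
    intro hne
    by_cases hpre : (interGraph σ I).Preconnected
    · rw [compCount_eq_one hne hpre]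
      exact (build_of_preconnected hne hpre).card_eq h
    · rw [SimpleGraph.Preconnected] at hpre
      push_neg at hpre
      obtain ⟨u, v, huv⟩ := hpre
      set A : Finset ι :=
        I.filter (fun a => ∃ ha : a ∈ I, (interGraph σ I).Reachable u ⟨a, ha⟩) with hA
      set B : Finset ι := I \ A with hB
      have hAI : A ⊆ I := Finset.filter_subset _ _
      have hBI : B ⊆ I := Finset.sdiff_subset
      have huA : u.1 ∈ A := by
        rw [hA, Finset.mem_filter]
        exact ⟨u.2, u.2, by rw [Subtype.coe_eta]⟩
      have hvB : v.1 ∈ B := by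
        rw [hB, Finset.mem_sdiff]
        refine ⟨v.2, fun hc => ?_⟩
        rw [hA, Finset.mem_filter] at hc
        obtain ⟨-, hv2, hreach⟩ := hc
        rw [Subtype.coe_eta] at hreach
        exact huv hreach
      have hdisj : Disjoint A B := Finset.disjoint_sdiff
      have hcross : ∀ a ∈ A, ∀ b ∈ B, σ a ∩ σ b = ∅ := by
        intro a ha b hb
        by_contra hc
        have hint : (σ a ∩ σ b).Nonempty := Finset.nonempty_iff_ne_empty.2 hc
        have hab : a ≠ b := fun hab => (Finset.mem_sdiff.1 hb).2 (hab ▸ ha)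
        rw [hA, Finset.mem_filter] at ha
        obtain ⟨haI, haI', hreach⟩ := ha
        have hbI : b ∈ I := (Finset.mem_sdiff.1 hb).1
        have hadj : (interGraph σ I).Adj ⟨a, haI'⟩ ⟨b, hbI⟩ :=
          ⟨fun hc' => hab (Subtype.mk_eq_mk.mp hc'), hint⟩
        have : b ∈ A := by
          rw [hA, Finset.mem_filter]
          exact ⟨hbI, hbI, hreach.trans hadj.reachable⟩
        exact (Finset.mem_sdiff.1 hb).2 this
      have hIAB : I = A ∪ B := (Finset.union_sdiff_of_subset hAI).symm
      have hAne : A.Nonempty := ⟨u.1, huA⟩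
      have hBne : B.Nonempty := ⟨v.1, hvB⟩
      have hAss : A ⊂ I := Finset.ssubset_iff_of_subset hAI |>.2
        ⟨v.1, hBI hvB, (Finset.mem_sdiff.1 hvB).2⟩
      have hBss : B ⊂ I := Finset.ssubset_iff_of_subset hBI |>.2
        ⟨u.1, hAI huA, fun hc => (Finset.mem_sdiff.1 hc).2 huA⟩
      -- σ unions are disjoint
      have hσdisj : Disjoint (unionOver σ A) (unionOver σ B) := by
        rw [Finset.disjoint_left]
        intro c hcA hcB
        obtain ⟨a, haA, hca⟩ := Finset.mem_sup.1 hcA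
        obtain ⟨b, hbB, hcb⟩ := Finset.mem_sup.1 hcB
        have := hcross a haA b hbB
        have : c ∈ σ a ∩ σ b := Finset.mem_inter.2 ⟨hca, hcb⟩
        rw [hcross a haA b hbB] at this
        exact absurd this (Finset.notMem_empty c)
      -- α unions are disjoint
      have hαb : ∀ b ∈ B, unionOver α A ∩ α b = ∅ := by
        intro b hb
        have hbA : b ∉ A := (Finset.mem_sdiff.1 hb).2
        refine (h.2 A hAne b hbA).1 ?_
        rw [← Finset.subset_empty]
        intro c hc
        obtain ⟨hc1, hc2⟩ := Finset.mem_inter.1 hc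
        obtain ⟨a, haA, hca⟩ := Finset.mem_sup.1 hc1
        have := hcross a haA b hb
        have hmem : c ∈ σ a ∩ σ b := Finset.mem_inter.2 ⟨hca, hc2⟩
        rwa [this] at hmem
      have hαdisj : Disjoint (unionOver α A) (unionOver α B) := by
        rw [Finset.disjoint_left]
        intro c hcA hcB
        obtain ⟨b, hbB, hcb⟩ := Finset.mem_sup.1 hcB
        have : c ∈ unionOver α A ∩ α b := Finset.mem_inter.2 ⟨hcA, hcb⟩
        rw [hαb b hbB] at this
        exact absurd this (Finset.notMem_empty c)
      have hσu : unionOver σ I = unionOver σ A ∪ unionOver σ B := by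
        rw [hIAB, unionOver, Finset.sup_union]; rfl
      have hαu : unionOver α I = unionOver α A ∪ unionOver α B := by
        rw [hIAB, unionOver, Finset.sup_union]; rfl
      have hcc : compCount σ I = compCount σ A + compCount σ B := by
        rw [hIAB]; exact compCount_union hdisj hcross
      have ihA := ih A hAss hAne
      have ihB := ih B hBss hBne
      rw [hσu, hαu, hcc, Finset.card_union_of_disjoint hσdisj,
        Finset.card_union_of_disjoint hαdisj]
      omega

end Aux3

section Aux4

open Finset

lemma sc_alt_sum {N : ℕ} (S : Finset (Fin N)) :
    ∑ G ∈ S.powerset, (-1 : ℤ) ^ (S.card - G.card) = if S = ∅ then 1 else 0 := by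
  rw [← Finset.sum_powerset_neg_one_pow_card]
  refine Finset.sum_nbij' (fun G => S \ G) (fun G => S \ G) ?_ ?_ ?_ ?_ ?_
  · intro G hG; exact Finset.mem_powerset.2 Finset.sdiff_subset
  · intro G hG; exact Finset.mem_powerset.2 Finset.sdiff_subset
  · intro G hG; exact Finset.sdiff_sdiff_eq_self (Finset.mem_powerset.1 hG)
  · intro G hG; exact Finset.sdiff_sdiff_eq_self (Finset.mem_powerset.1 hG)
  · intro G hG
    rw [Finset.card_sdiff_of_subset (Finset.mem_powerset.1 hG)]

lemma sc_inner_sum {N : ℕ} (A : Finset (Fin N)) :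
    ∑ F ∈ univ.filter (fun F => A ⊆ F), (-1 : ℤ) ^ (N - F.card)
      = if A = univ then 1 else 0 := by
  classical
  have hcard : ∀ F : Finset (Fin N), F.card ≤ N := by
    intro F; simpa using Finset.card_le_univ F
  have step : ∑ F ∈ univ.filter (fun F => A ⊆ F), (-1 : ℤ) ^ (N - F.card)
      = ∑ G ∈ (univ \ A).powerset, (-1 : ℤ) ^ ((univ \ A).card - G.card) := by
    refine Finset.sum_nbij' (fun F => F \ A) (fun G => A ∪ G) ?_ ?_ ?_ ?_ ?_
    · intro F hF
      exact Finset.mem_powerset.2 (Finset.sdiff_subset_sdiff (Finset.subset_univ F) le_rfl)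
    · intro G hG
      exact Finset.mem_filter.2 ⟨Finset.mem_univ _, Finset.subset_union_left⟩
    · intro F hF
      exact Finset.union_sdiff_of_subset (Finset.mem_filter.1 hF).2
    · intro G hG
      refine Finset.union_sdiff_cancel_left ?_
      have hGs := Finset.mem_powerset.1 hG
      exact Finset.disjoint_left.2 fun a haA haG => (Finset.mem_sdiff.1 (hGs haG)).2 haA
    · intro F hF
      have hA : A ⊆ F := (Finset.mem_filter.1 hF).2
      congr 1
      rw [Finset.card_sdiff_of_subset hA, Finset.card_sdiff_of_subset (Finset.subset_univ A),
        Finset.card_univ, Fintype.card_fin]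
      have h1 := Finset.card_le_card hA
      have h2 := hcard F
      omega
  rw [step, sc_alt_sum]
  congr 1
  rw [Finset.sdiff_eq_empty_iff_subset, eq_iff_iff]
  exact ⟨fun hsub => le_antisymm (Finset.subset_univ A) hsub,
    fun hu => hu ▸ Finset.Subset.refl _⟩

lemma sc_rhs_eval {r N : ℕ} (α : Fin r → Finset (Fin N)) :
    ∑ F ∈ facesOf α, (-1 : ℤ) ^ (N - F.card)
      = ∑ t : Finset (Fin r), (-1 : ℤ) ^ t.card *
          (if unionOver α t = univ then 1 else 0) := by
  classical
  have prodχ : ∀ (t : Finset (Fin r)) (F : Finset (Fin N)),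
      (∏ i ∈ t, (if α i ⊆ F then (1:ℤ) else 0))
        = if unionOver α t ⊆ F then 1 else 0 := by
    intro t F
    by_cases h : unionOver α t ⊆ F
    · rw [if_pos h]
      refine Finset.prod_eq_one fun i hi => ?_
      have hx : α i ⊆ F := (Finset.le_sup hi).trans h
      rw [if_pos hx]
    · rw [if_neg h]
      have : ¬ ∀ i ∈ t, α i ⊆ F := fun hc => h (Finset.sup_le hc)
      push_neg at this
      obtain ⟨i, hit, hi⟩ := this
      exact Finset.prod_eq_zero hit (if_neg hi)
  have expand : ∀ F : Finset (Fin N),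
      (if (∀ i, ¬ α i ⊆ F) then (1 : ℤ) else 0)
        = ∑ t : Finset (Fin r), (-1 : ℤ) ^ t.card *
            (if unionOver α t ⊆ F then 1 else 0) := by
    intro F
    have lhs_eq : (if (∀ i, ¬ α i ⊆ F) then (1 : ℤ) else 0)
        = ∏ i : Fin r, ((-(if α i ⊆ F then (1:ℤ) else 0)) + 1) := by
      by_cases hF : ∀ i, ¬ α i ⊆ F
      · rw [if_pos hF]
        refine (Finset.prod_eq_one ?_).symm
        intro i _
        rw [if_neg (hF i)]; ring
      · rw [if_neg hF]
        push_neg at hF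
        obtain ⟨i, hi⟩ := hF
        refine (Finset.prod_eq_zero (Finset.mem_univ i) ?_).symm
        rw [if_pos hi]; ring
    rw [lhs_eq, Finset.prod_add, Finset.powerset_univ]
    refine Finset.sum_congr rfl fun t _ => ?_
    rw [Finset.prod_const_one, mul_one, ← prodχ t F]
    rw [show (fun i => -(if α i ⊆ F then (1:ℤ) else 0))
        = (fun i => (-1) * (if α i ⊆ F then (1:ℤ) else 0)) from by funext i; ring]
    rw [Finset.prod_mul_distrib, Finset.prod_const]
  have faces_eq : ∑ F ∈ facesOf α, (-1 : ℤ) ^ (N - F.card)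
      = ∑ F : Finset (Fin N), (if (∀ i, ¬ α i ⊆ F) then (1 : ℤ) else 0)
          * (-1) ^ (N - F.card) := by
    rw [facesOf, Finset.sum_filter]
    refine Finset.sum_congr rfl fun F _ => ?_
    by_cases hF : ∀ i, ¬ α i ⊆ F
    · rw [if_pos hF, if_pos hF, one_mul]
    · rw [if_neg hF, if_neg hF, zero_mul]
  rw [faces_eq]
  rw [Finset.sum_congr rfl (fun F _ => by rw [expand F, Finset.sum_mul] :
    ∀ F ∈ (Finset.univ : Finset (Finset (Fin N))), _ = _), Finset.sum_comm]
  refine Finset.sum_congr rfl fun t _ => ?_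
  rw [← sc_inner_sum (unionOver α t), Finset.sum_filter, Finset.mul_sum]
  refine Finset.sum_congr rfl fun F _ => ?_
  by_cases hsub : unionOver α t ⊆ F
  · simp [if_pos hsub]
  · simp [if_neg hsub]

end Aux4

section Aux5

open Finset LaurentPolynomial

lemma sc_lhs_eval {n r N : ℕ} (σ : Fin r → Finset (Fin n)) (α : Fin r → Finset (Fin N))
    (h : PropertyI σ α) :
    lcoeff (simpChrom σ) ((n:ℤ) - N)
      = ∑ t : Finset (Fin r), (-1:ℤ)^t.card *
          (if unionOver α t = univ then 1 else 0) := by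
  classical
  have hC : ∀ k : ℕ, ((-1 : LaurentPolynomial ℤ))^k = C ((-1 : ℤ)^k) := by
    intro k; rw [map_pow, map_neg, map_one]
  rw [lcoeff, simpChrom, AddMonoidAlgebra.coeff_add, Finsupp.add_apply,
    AddMonoidAlgebra.coeff_sum, Finset.sum_apply']
  have hterm : ∀ I ∈ (univ : Finset (Fin r)).powerset.filter (fun I => I.Nonempty),
      (((-1 : LaurentPolynomial ℤ) ^ I.card *
        T ((n : ℤ) - ((unionOver σ I).card : ℤ) + (compCount σ I : ℤ)) :
          LaurentPolynomial ℤ).coeff ((n:ℤ) - N))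
      = (if unionOver α I = univ then (-1:ℤ)^I.card else 0) := by
    intro I hI
    have hIne : I.Nonempty := (Finset.mem_filter.1 hI).2
    have hkey := key_card h I hIne
    rw [hC, ← single_eq_C_mul_T, AddMonoidAlgebra.coeff_single, Finsupp.single_apply]
    have hiff : ((n : ℤ) - ((unionOver σ I).card : ℤ) + (compCount σ I : ℤ) = (n:ℤ) - N)
        ↔ (unionOver α I = univ) := by
      rw [← Finset.card_eq_iff_eq_univ, Fintype.card_fin]
      constructor
      · intro he; omega
      · intro hc; omega
    simp only [hiff]
  rw [Finset.sum_congr rfl hterm, T_apply]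
  -- now handle the right-hand side
  have hsplit : ∑ t : Finset (Fin r), (-1:ℤ)^t.card *
        (if unionOver α t = univ then 1 else 0)
      = ((-1:ℤ)^(∅ : Finset (Fin r)).card *
          (if unionOver α (∅ : Finset (Fin r)) = univ then 1 else 0))
        + ∑ t ∈ (univ : Finset (Finset (Fin r))).erase ∅,
            (-1:ℤ)^t.card * (if unionOver α t = univ then 1 else 0) :=
    (Finset.add_sum_erase _ _ (Finset.mem_univ ∅)).symm
  rw [hsplit]
  congr 1
  · -- empty-set term equals the T n contribution
    have h1 : unionOver α (∅ : Finset (Fin r)) = (∅ : Finset (Fin N)) := Finset.sup_empty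
    have h2 : ((∅ : Finset (Fin N)) = univ) ↔ N = 0 := by
      rw [eq_comm, Finset.univ_eq_empty_iff]
      constructor
      · intro hi
        by_contra hN
        exact hi.elim ⟨0, Nat.pos_of_ne_zero hN⟩
      · intro hN; subst hN; infer_instance
    have h3 : ((n:ℤ) = (n:ℤ) - N) ↔ N = 0 := by omega
    rw [h1, Finset.card_empty, pow_zero, one_mul]
    simp only [h2, h3]
  · -- nonempty terms
    rw [Finset.powerset_univ]
    have hfe : (univ : Finset (Finset (Fin r))).filter (fun I => I.Nonempty)
        = (univ : Finset (Finset (Fin r))).erase ∅ := by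
      rw [← Finset.filter_ne']
      exact Finset.filter_congr fun t _ => by
        simp [Finset.nonempty_iff_ne_empty]
    rw [hfe]
    refine Finset.sum_congr rfl fun t _ => ?_
    by_cases hc : unionOver α t = univ
    · rw [if_pos hc, if_pos hc, mul_one]
    · rw [if_neg hc, if_neg hc, mul_zero]

end Aux5


/-- lowest coefficient is the reduced Euler characteristic of the auxiliary
complex: under property I with witnesses `α_i ⊆ {1,…,N}`, the coefficient of `t^{n−N}` in
`χ_c(S)(t)` equals `Σ_{F ∈ T(S)} (−1)^{N−|F|} = (−1)^{N−1} χ̃(T(S))`, where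
`χ̃(T) = −Σ_{F ∈ T} (−1)^{|F|}`.  (Here `(−1)^{N−1}` is rendered as `(−1)^{N+1}`, which is
the same integer.) -/
theorem stmt_18 {n r N : ℕ}
    (σ : Fin r → Finset (Fin n)) (α : Fin r → Finset (Fin N))
    (h : PropertyI σ α) :
    lcoeff (simpChrom σ) ((n : ℤ) - N) = ∑ F ∈ facesOf α, (-1 : ℤ) ^ (N - F.card) ∧
    (∑ F ∈ facesOf α, (-1 : ℤ) ^ (N - F.card)) =
      (-1) ^ (N + 1) * (-(∑ F ∈ facesOf α, (-1 : ℤ) ^ F.card)) := by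
  classical
  constructor
  · rw [sc_rhs_eval α]
    exact sc_lhs_eval σ α h
  · have hpow : ∀ (c : ℕ), c ≤ N → (-1:ℤ)^(N - c) = (-1)^N * (-1)^c := by
      intro c hc
      have h1 : (-1:ℤ)^N = (-1)^(N - c) * (-1)^c := by
        rw [← pow_add]; congr 1; omega
      have h2 : ((-1:ℤ)^c) * ((-1)^c) = 1 := by
        rw [← pow_add]; exact Even.neg_one_pow ⟨c, rfl⟩
      rw [h1, mul_assoc, h2, mul_one]
    rw [Finset.sum_congr rfl
      (fun F _ => hpow F.card (by simpa using Finset.card_le_univ F))]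
    rw [← Finset.mul_sum, pow_succ]
    ring
end
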